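/- Let F be a free group, R a normal subgroup of F, and G = F/R. Then the second group homology of G with trivial coefficients ℤ satisfies Hopf's formula: H₂(G,ℤ) is isomorphic to the abelian group (R ∩ [F,F]) / [F,R]. -/

import Mathlib

set_option linter.unusedSectionVars false


/-- Second boundary map `ℤ[G²] → ℤ[G]` of the bar complex computing the homology of `G`
with trivial coefficients `ℤ`: `d₂(g,h) = [h] - [gh] + [g]`. -/
noncomputable def barD2 (G : Type*) [Group G] : ((G × G) →₀ ℤ) →ₗ[ℤ] (G →₀ ℤ) :=
  Finsupp.lift (G →₀ ℤ) ℤ (G × G) fun p =>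
    Finsupp.single p.2 1 - Finsupp.single (p.1 * p.2) 1 + Finsupp.single p.1 1

/-- Third boundary map `ℤ[G³] → ℤ[G²]` of the bar complex:
`d₃(g,h,k) = (h,k) - (gh,k) + (g,hk) - (g,h)`. -/
noncomputable def barD3 (G : Type*) [Group G] : ((G × G × G) →₀ ℤ) →ₗ[ℤ] ((G × G) →₀ ℤ) :=
  Finsupp.lift ((G × G) →₀ ℤ) ℤ (G × G × G) fun t =>
    Finsupp.single (t.2.1, t.2.2) 1 - Finsupp.single (t.1 * t.2.1, t.2.2) 1 +
      Finsupp.single (t.1, t.2.1 * t.2.2) 1 - Finsupp.single (t.1, t.2.1) 1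

/-- The second group homology `H₂(G, ℤ)` of `G` with trivial coefficients `ℤ`,
defined as `ker d₂ / im d₃` in the bar complex (since `im d₃ ⊆ ker d₂`, this is the
quotient of `ker d₂` by the pullback of `range d₃`). -/
noncomputable abbrev H2 (G : Type*) [Group G] :=
  LinearMap.ker (barD2 G) ⧸
    (LinearMap.range (barD3 G)).comap (LinearMap.ker (barD2 G)).subtype

open scoped commutatorElement

namespace HopfAux

variable {G : Type*} [Group G]

lemma barD2_single (p : G × G) : barD2 G (Finsupp.single p 1) =
    Finsupp.single p.2 1 - Finsupp.single (p.1 * p.2) 1 + Finsupp.single p.1 1 := by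
  simp [barD2, Finsupp.lift_apply, Finsupp.sum_single_index]

lemma barD3_single (t : G × G × G) : barD3 G (Finsupp.single t 1) =
    Finsupp.single (t.2.1, t.2.2) 1 - Finsupp.single (t.1 * t.2.1, t.2.2) 1 +
      Finsupp.single (t.1, t.2.1 * t.2.2) 1 - Finsupp.single (t.1, t.2.1) 1 := by
  simp [barD3, Finsupp.lift_apply, Finsupp.sum_single_index]

lemma d2_comp_d3 : (barD2 G).comp (barD3 G) = 0 := by
  apply Finsupp.lhom_ext'
  intro t
  apply LinearMap.ext_ring
  simp only [LinearMap.comp_apply, Finsupp.lsingle_apply, LinearMap.zero_apply]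
  rw [barD3_single]
  simp only [map_add, map_sub, barD2_single]
  obtain ⟨g, h, k⟩ := t
  simp only []
  rw [mul_assoc]
  abel

/-- `K = ℤ[G²]/im d₃`. -/
abbrev Kmod (G : Type*) [Group G] := ((G × G) →₀ ℤ) ⧸ LinearMap.range (barD3 G)

noncomputable def qK (G : Type*) [Group G] : ((G × G) →₀ ℤ) →ₗ[ℤ] Kmod G :=
  (LinearMap.range (barD3 G)).mkQ

lemma qK_surjective : Function.Surjective (qK G) := Submodule.mkQ_surjective _

lemma qK_eq_zero_iff (z : (G × G) →₀ ℤ) : qK G z = 0 ↔ z ∈ LinearMap.range (barD3 G) := by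
  rw [qK, Submodule.mkQ_apply, Submodule.Quotient.mk_eq_zero]

/-- the class of `single (1,1)`. -/
noncomputable def σK (G : Type*) [Group G] : Kmod G := qK G (Finsupp.single (1, 1) 1)

lemma qK_cocycle (g h k : G) :
    qK G (Finsupp.single (h, k) 1) - qK G (Finsupp.single (g * h, k) 1) +
      qK G (Finsupp.single (g, h * k) 1) - qK G (Finsupp.single (g, h) 1) = 0 := by
  simp only [← map_sub, ← map_add]
  rw [qK_eq_zero_iff]
  exact ⟨Finsupp.single (g, h, k) 1, barD3_single (g, h, k)⟩

lemma qK_one_left (g : G) : qK G (Finsupp.single (1, g) 1) = σK G := by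
  rw [σK, ← sub_eq_zero, ← map_sub, qK_eq_zero_iff]
  refine ⟨Finsupp.single (1, 1, g) 1, ?_⟩
  have := barD3_single ((1:G), (1:G), g)
  simp only [one_mul] at this
  rw [this]; abel

lemma qK_one_right (g : G) : qK G (Finsupp.single (g, 1) 1) = σK G := by
  rw [σK, ← sub_eq_zero, ← map_sub, qK_eq_zero_iff]
  refine ⟨-Finsupp.single (g, 1, 1) 1, ?_⟩
  rw [map_neg]
  have := barD3_single (g, (1:G), (1:G))
  simp only [one_mul, mul_one] at this
  rw [this]; abel



section CExt
variable (G : Type*) [Group G]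

/-- `G ×_c K`, the extension of `G` by `K` along the universal cocycle. -/
def CExt := G × Kmod G

variable {G}

noncomputable instance : Mul (CExt G) :=
  ⟨fun a b => (a.1 * b.1, a.2 + b.2 + qK G (Finsupp.single (a.1, b.1) 1))⟩

noncomputable instance : One (CExt G) := ⟨((1 : G), -σK G)⟩

noncomputable instance : Inv (CExt G) :=
  ⟨fun a => (a.1⁻¹, -a.2 - σK G - qK G (Finsupp.single (a.1⁻¹, a.1) 1))⟩

lemma cext_mul_def (a b : CExt G) :
    a * b = (a.1 * b.1, a.2 + b.2 + qK G (Finsupp.single (a.1, b.1) 1)) := rfl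

lemma cext_one_def : (1 : CExt G) = ((1 : G), -σK G) := rfl

lemma cext_inv_def (a : CExt G) :
    a⁻¹ = (a.1⁻¹, -a.2 - σK G - qK G (Finsupp.single (a.1⁻¹, a.1) 1)) := rfl

lemma cext_mul_fst (a b : CExt G) : (a * b).1 = a.1 * b.1 := rfl
lemma cext_mul_snd (a b : CExt G) :
    (a * b).2 = a.2 + b.2 + qK G (Finsupp.single (a.1, b.1) 1) := rfl
lemma cext_one_fst : (1 : CExt G).1 = 1 := rfl
lemma cext_one_snd : (1 : CExt G).2 = -σK G := rfl
lemma cext_inv_fst (a : CExt G) : a⁻¹.1 = a.1⁻¹ := rfl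
lemma cext_inv_snd (a : CExt G) :
    a⁻¹.2 = -a.2 - σK G - qK G (Finsupp.single (a.1⁻¹, a.1) 1) := rfl

noncomputable instance : Group (CExt G) := by
  refine Group.ofLeftAxioms ?_ ?_ ?_
  · intro a b c
    refine Prod.ext (mul_assoc a.1 b.1 c.1) ?_
    simp only [cext_mul_snd, cext_mul_fst]
    have := qK_cocycle a.1 b.1 c.1
    linear_combination (norm := abel) -this
  · intro a
    refine Prod.ext (one_mul a.1) ?_
    simp only [cext_mul_snd, cext_one_fst, cext_one_snd, qK_one_left]
    abel
  · intro a
    refine Prod.ext (inv_mul_cancel a.1) ?_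
    simp only [cext_mul_snd, cext_inv_fst, cext_inv_snd, cext_one_snd]
    abel

/-- first projection as a hom. -/
def cextFst : CExt G →* G where
  toFun := Prod.fst
  map_one' := rfl
  map_mul' _ _ := rfl

/-- pair constructor for `CExt`. -/
def cext (g : G) (k : Kmod G) : CExt G := (g, k)

@[simp] lemma cext_fst (g : G) (k : Kmod G) : (cext g k).1 = g := rfl
@[simp] lemma cext_snd (g : G) (k : Kmod G) : (cext g k).2 = k := rfl

/-- elements of the form `(1, b)` are central in `CExt G`. -/
lemma cext_central (m : CExt G) (b : Kmod G) :
    m * cext 1 b = cext 1 b * m := by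
  refine Prod.ext (by simp [cext_mul_fst]) ?_
  simp only [cext_mul_snd, cext_fst, cext_snd, qK_one_left, qK_one_right]
  abel

/-- `d₂` descends to `K`. -/
noncomputable def d2bar : Kmod G →ₗ[ℤ] (G →₀ ℤ) :=
  Submodule.liftQ _ (barD2 G) (by
    rintro z ⟨w, rfl⟩
    have := congrFun (congrArg (fun f => f.toFun) (d2_comp_d3 (G := G))) w
    simpa using this)

lemma d2bar_qK (z : (G × G) →₀ ℤ) : d2bar (qK G z) = barD2 G z := rfl

lemma d2bar_σK : d2bar (σK G) = Finsupp.single (1 : G) 1 := by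
  rw [σK, d2bar_qK, barD2_single]
  simp

/-- the `ψ` homomorphism `CExt G →* ℤ[G]`. -/
noncomputable def ψc : CExt G →* Multiplicative (G →₀ ℤ) :=
  MonoidHom.mk' (fun m => Multiplicative.ofAdd (d2bar m.2 + Finsupp.single m.1 1)) (by
    intro a b
    simp only [cext_mul_def]
    rw [← ofAdd_add]
    congr 1
    simp only [map_add, d2bar_qK, barD2_single]
    abel)

lemma ψc_apply (m : CExt G) : ψc m = Multiplicative.ofAdd (d2bar m.2 + Finsupp.single m.1 1) := rfl

end CExt

section Main

variable {F : Type*} [Group F] [IsFreeGroup F] (R : Subgroup F) [R.Normal]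

/-- the projection `F → F/R`. -/
def πq : F →* F ⧸ R := QuotientGroup.mk' R

/-- a set-theoretic section of `πq`. -/
noncomputable def sec : F ⧸ R → F := fun g => Quotient.out g

@[simp] lemma πq_sec (g : F ⧸ R) : πq R (sec R g) = g := QuotientGroup.out_eq' g

lemma πq_eq_one_iff (w : F) : πq R w = 1 ↔ w ∈ R := QuotientGroup.eq_one_iff w

/-- the universal lift `Φ : F → CExt (F/R)`. -/
noncomputable def Φm : F →* CExt (F ⧸ R) :=
  IsFreeGroup.lift fun x => cext (πq R (IsFreeGroup.of x)) 0

lemma Φm_of (x : IsFreeGroup.Generators F) :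
    Φm R (IsFreeGroup.of x) = cext (πq R (IsFreeGroup.of x)) 0 := IsFreeGroup.lift_of _ _

lemma Φm_fst (w : F) : (Φm R w).1 = πq R w := by
  have : (cextFst).comp (Φm R) = πq R := by
    apply IsFreeGroup.ext_hom
    intro x
    simp [Φm_of, cextFst]; rfl
  exact congrArg (fun f => f w) this

/-- the cochain `c : F → K`. -/
noncomputable def cc (w : F) : Kmod (F ⧸ R) := (Φm R w).2

lemma cc_mul (v w : F) : cc R (v * w) =
    cc R v + cc R w + qK (F ⧸ R) (Finsupp.single (πq R v, πq R w) 1) := by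
  have h := map_mul (Φm R) v w
  have := congrArg Prod.snd h
  simp only [cext_mul_def] at this
  rw [cc, this, Φm_fst, Φm_fst, cc, cc]

lemma cc_one : cc R 1 = -σK (F ⧸ R) := by
  have := congrArg Prod.snd (map_one (Φm R))
  simpa [cc, cext_one_def] using this

lemma cc_mul_R {v w : F} (hv : v ∈ R) (hw : w ∈ R) :
    cc R (v * w) = cc R v + cc R w + σK (F ⧸ R) := by
  rw [cc_mul, (πq_eq_one_iff R v).2 hv, (πq_eq_one_iff R w).2 hw, σK]

/-- the "exponent-sum" homomorphism `F → ℤ[F/R]`. -/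
noncomputable def hGm : F →* Multiplicative ((F ⧸ R) →₀ ℤ) :=
  IsFreeGroup.lift fun x => Multiplicative.ofAdd (Finsupp.single (πq R (IsFreeGroup.of x)) 1)

lemma d2bar_cc (w : F) :
    d2bar (cc R w) = (hGm R w).toAdd - Finsupp.single (πq R w) 1 := by
  have : (ψc).comp (Φm R) = hGm R := by
    apply IsFreeGroup.ext_hom
    intro x
    simp only [MonoidHom.comp_apply, Φm_of, hGm, IsFreeGroup.lift_of, ψc_apply]
    simp
  have h2 := congrArg (fun f => f w) this
  simp only [MonoidHom.comp_apply, ψc_apply] at h2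
  have h3 := congrArg Multiplicative.toAdd h2
  simp only [toAdd_ofAdd] at h3
  rw [show d2bar (cc R w) = (hGm R w).toAdd - Finsupp.single ((Φm R w).1) 1 by
    rw [← h3, cc]; abel, Φm_fst R w]

lemma hGm_commutator {w : F} (hw : w ∈ commutator F) : hGm R w = 1 := by
  have : commutator F ≤ (hGm R).ker := by
    rw [commutator, Subgroup.commutator_le]
    intro a _ b _
    rw [MonoidHom.mem_ker, map_commutatorElement]
    rw [commutatorElement_eq_one_iff_commute]
    exact Commute.all _ _
  exact this hw

lemma cextFst_comp_Φm : (cextFst).comp (Φm R) = πq R := by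
  apply IsFreeGroup.ext_hom
  intro x
  simp [Φm_of, cextFst]; rfl

/-- generator differences in the same `R`-coset. -/
def Sgen : Set F :=
  {a | ∃ x y : IsFreeGroup.Generators F, πq R (IsFreeGroup.of x) = πq R (IsFreeGroup.of y) ∧
    a = IsFreeGroup.of x * (IsFreeGroup.of y)⁻¹}

/-- the subgroup `[F,F] ⊔ ⟨Sgen⟩`. -/
def Jsub : Subgroup F := commutator F ⊔ Subgroup.closure (Sgen R)

lemma commutator_le_Jsub : commutator F ≤ Jsub R := le_sup_left

instance Jsub_normal : (Jsub R).Normal := by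
  constructor
  intro n hn g
  have h1 : g * n * g⁻¹ = ⁅g, n⁆ * n := by group
  rw [h1]
  exact mul_mem (commutator_le_Jsub R
    (Subgroup.commutator_mem_commutator (Subgroup.mem_top _) (Subgroup.mem_top _))) hn

noncomputable local instance : CommGroup (F ⧸ Jsub R) :=
  { (inferInstance : Group (F ⧸ Jsub R)) with
    mul_comm := by
      intro a b
      induction a using QuotientGroup.induction_on
      induction b using QuotientGroup.induction_on
      rename_i a b
      rw [← QuotientGroup.mk_mul, ← QuotientGroup.mk_mul, ← mul_inv_eq_one,
        ← QuotientGroup.mk_inv, ← QuotientGroup.mk_mul, QuotientGroup.eq_one_iff]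
      have : a * b * (b * a)⁻¹ = ⁅a, b⁆ := by group
      rw [this]
      exact commutator_le_Jsub R
        (Subgroup.commutator_mem_commutator (Subgroup.mem_top _) (Subgroup.mem_top _)) }

open scoped Pointwise
open scoped Classical

/-- a preferred generator in each coset that contains a generator. -/
noncomputable def pick : (F ⧸ R) → F := fun g =>
  if h : ∃ x : IsFreeGroup.Generators F, πq R (IsFreeGroup.of x) = g
  then IsFreeGroup.of h.choose else 1

noncomputable def Ξlin : ((F ⧸ R) →₀ ℤ) →ₗ[ℤ] Additive (F ⧸ Jsub R) :=
  Finsupp.lift _ ℤ _ fun g => Additive.ofMul (QuotientGroup.mk (pick R g) : F ⧸ Jsub R)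

lemma Ξlin_single (g : F ⧸ R) :
    Ξlin R (Finsupp.single g 1) = Additive.ofMul (QuotientGroup.mk (pick R g) : F ⧸ Jsub R) := by
  rw [Ξlin, Finsupp.lift_apply, Finsupp.sum_single_index] <;> simp

lemma mem_Jsub_of_hGm {w : F} (hw : hGm R w = 1) : w ∈ Jsub R := by
  have key : ∀ v : F, Ξlin R ((hGm R v).toAdd) =
      Additive.ofMul (QuotientGroup.mk v : F ⧸ Jsub R) := by
    intro v
    have hhom : ((AddMonoidHom.toMultiplicative (Ξlin R).toAddMonoidHom).comp (hGm R)) =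
        MonoidHom.mk' (fun w : F =>
          Multiplicative.ofAdd (Additive.ofMul (QuotientGroup.mk w : F ⧸ Jsub R)))
          (fun a b => rfl) := by
      apply IsFreeGroup.ext_hom
      intro x
      simp only [MonoidHom.comp_apply, hGm, IsFreeGroup.lift_of, MonoidHom.mk'_apply]
      have h1 : (QuotientGroup.mk (pick R (πq R (IsFreeGroup.of x))) : F ⧸ Jsub R) =
          QuotientGroup.mk (IsFreeGroup.of x) := by
        rw [pick]
        have hex : ∃ y : IsFreeGroup.Generators F,
            πq R (IsFreeGroup.of y) = πq R (IsFreeGroup.of x) := ⟨x, rfl⟩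
        rw [dif_pos hex]
        rw [← mul_inv_eq_one, ← QuotientGroup.mk_inv, ← QuotientGroup.mk_mul,
          QuotientGroup.eq_one_iff]
        refine (le_sup_right : Subgroup.closure (Sgen R) ≤ Jsub R) ?_
        exact Subgroup.subset_closure ⟨hex.choose, x, hex.choose_spec, rfl⟩
      show Multiplicative.ofAdd ((Ξlin R) (Finsupp.single (πq R (IsFreeGroup.of x)) 1)) = _
      rw [Ξlin_single, h1]; rfl
    have := congrArg (fun f => f v) hhom
    exact congrArg Multiplicative.toAdd this
  have h0 := key w
  rw [hw] at h0
  simp only [toAdd_one, map_zero] at h0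
  have : (QuotientGroup.mk w : F ⧸ Jsub R) = 1 := by
    have := congrArg Additive.toMul h0
    simpa using this.symm
  exact (QuotientGroup.eq_one_iff w).mp this

lemma closure_Sgen_le_ker : Subgroup.closure (Sgen R) ≤ (Φm R).ker := by
  rw [Subgroup.closure_le]
  rintro a ⟨x, y, hxy, rfl⟩
  simp only [SetLike.mem_coe, MonoidHom.mem_ker, map_mul, map_inv, Φm_of, hxy]
  exact mul_inv_cancel _

lemma ker_Φm_le_ker_πq {w : F} (hw : Φm R w = 1) : πq R w = 1 := by
  have := congrArg (fun f => f w) (cextFst_comp_Φm R)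
  simp only [MonoidHom.comp_apply] at this
  rw [← this, hw, map_one]

/-- decomposition: an element of `R` with trivial exponent sums differs from an
element of `R ⊓ [F,F]` by an element of `ker Φ`. -/
lemma dec_lemma {ρ : F} (hρR : ρ ∈ R) (hρ : hGm R ρ = 1) :
    ∃ d, d ∈ R ⊓ commutator F ∧ cc R ρ = cc R d := by
  have hJ : ρ ∈ Jsub R := mem_Jsub_of_hGm R hρ
  rw [Jsub] at hJ
  have : ρ ∈ (commutator F : Set F) * (Subgroup.closure (Sgen R) : Set F) := by
    rw [← Subgroup.normal_mul]
    exact_mod_cast hJ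
  obtain ⟨d, hd, p, hp, rfl⟩ := this
  have hΦp : Φm R p = 1 := closure_Sgen_le_ker R hp
  have hπp : πq R p = 1 := ker_Φm_le_ker_πq R hΦp
  have hpR : p ∈ R := (πq_eq_one_iff R p).mp hπp
  refine ⟨d, ⟨?_, hd⟩, ?_⟩
  · have : d = (d * p) * p⁻¹ := by group
    rw [this]
    exact R.mul_mem hρR (R.inv_mem hpR)
  · rw [cc, cc, map_mul, hΦp, mul_one]

/-- the standard 2-cocycle `r(g,h) = s(g)s(h)s(gh)⁻¹ ∈ R`. -/
noncomputable def rc (p : (F ⧸ R) × (F ⧸ R)) : F :=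
  sec R p.1 * sec R p.2 * (sec R (p.1 * p.2))⁻¹

lemma rc_mem (p : (F ⧸ R) × (F ⧸ R)) : rc R p ∈ R := by
  rw [← πq_eq_one_iff, rc, map_mul, map_mul, map_inv, πq_sec, πq_sec, πq_sec]
  exact mul_inv_cancel _

lemma sec_mul (g h : F ⧸ R) : sec R g * sec R h = rc R (g, h) * sec R (g * h) := by
  rw [rc]; group

noncomputable def κlin : (((F ⧸ R) × (F ⧸ R)) →₀ ℤ) →ₗ[ℤ] Kmod (F ⧸ R) :=
  Finsupp.lift _ ℤ _ fun p => cc R (rc R p) + σK (F ⧸ R)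

noncomputable def γlin : ((F ⧸ R) →₀ ℤ) →ₗ[ℤ] Kmod (F ⧸ R) :=
  Finsupp.lift _ ℤ _ fun g => cc R (sec R g)

lemma κlin_single (p : (F ⧸ R) × (F ⧸ R)) :
    κlin R (Finsupp.single p 1) = cc R (rc R p) + σK (F ⧸ R) := by
  rw [κlin, Finsupp.lift_apply, Finsupp.sum_single_index] <;> simp

lemma γlin_single (g : F ⧸ R) : γlin R (Finsupp.single g 1) = cc R (sec R g) := by
  rw [γlin, Finsupp.lift_apply, Finsupp.sum_single_index] <;> simp

lemma qK_decomp :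
    (qK (F ⧸ R)) = κlin R - (γlin R).comp (barD2 (F ⧸ R)) := by
  apply Finsupp.lhom_ext'
  intro p
  apply LinearMap.ext_ring
  simp only [LinearMap.comp_apply, Finsupp.lsingle_apply, LinearMap.sub_apply]
  rw [κlin_single, barD2_single]
  simp only [map_add, map_sub, γlin_single]
  obtain ⟨g, h⟩ := p
  simp only []
  -- key identity
  have h1 : cc R (sec R g * sec R h) = cc R (sec R g) + cc R (sec R h) +
      qK (F ⧸ R) (Finsupp.single (g, h) 1) := by
    rw [cc_mul, πq_sec, πq_sec]
  have h2 : cc R (sec R g * sec R h) = cc R (rc R (g, h)) + cc R (sec R (g * h)) +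
      σK (F ⧸ R) := by
    rw [sec_mul, cc_mul, (πq_eq_one_iff R _).2 (rc_mem R (g, h)), πq_sec, qK_one_left]
  linear_combination (norm := abel) h2 - h1

/-- `c' : R → K` as a homomorphism. -/
noncomputable def crhom : ↥R →* Multiplicative (Kmod (F ⧸ R)) :=
  MonoidHom.mk' (fun ρ => Multiplicative.ofAdd (cc R ↑ρ + σK (F ⧸ R))) (by
    intro a b
    rw [← ofAdd_add]
    congr 1
    push_cast [cc_mul_R R a.2 b.2]
    abel)

lemma crhom_apply (ρ : ↥R) : crhom R ρ = Multiplicative.ofAdd (cc R ↑ρ + σK (F ⧸ R)) := rfl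

lemma κlin_rep (z : ((F ⧸ R) × (F ⧸ R)) →₀ ℤ) :
    ∃ ρ : ↥R, κlin R z = cc R ↑ρ + σK (F ⧸ R) := by
  induction z using Finsupp.induction_linear with
  | zero => exact ⟨1, by simp [cc_one]⟩
  | add f g hf hg =>
      obtain ⟨ρ1, h1'⟩ := hf
      obtain ⟨ρ2, h2'⟩ := hg
      refine ⟨ρ1 * ρ2, ?_⟩
      rw [map_add, h1', h2']
      push_cast [cc_mul_R R ρ1.2 ρ2.2]
      abel
  | single p b =>
      refine ⟨(⟨rc R p, rc_mem R p⟩ : ↥R) ^ b, ?_⟩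
      have hc := map_zpow (crhom R) (⟨rc R p, rc_mem R p⟩ : ↥R) b
      have hc2 := congrArg Multiplicative.toAdd hc
      simp only [crhom_apply, toAdd_ofAdd, toAdd_zpow] at hc2
      have hsm : Finsupp.single p b = b • Finsupp.single p (1 : ℤ) := by
        rw [Finsupp.smul_single, smul_eq_mul, mul_one]
      rw [hsm, map_smul, κlin_single, hc2]

/-- every 2-cycle is homologous to `c'(d)` for some `d ∈ R ⊓ [F,F]`. -/
lemma cycle_rep {z : ((F ⧸ R) × (F ⧸ R)) →₀ ℤ} (hz : barD2 (F ⧸ R) z = 0) :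
    ∃ d, d ∈ R ⊓ commutator F ∧ qK (F ⧸ R) z = cc R d + σK (F ⧸ R) := by
  have h1 : qK (F ⧸ R) z = κlin R z := by
    rw [qK_decomp]
    simp [hz]
  obtain ⟨ρ, hρ⟩ := κlin_rep R z
  rw [h1, hρ]
  have hd2 : d2bar (qK (F ⧸ R) z) = 0 := by rw [d2bar_qK, hz]
  rw [h1, hρ] at hd2
  rw [map_add, d2bar_cc, d2bar_σK, (πq_eq_one_iff R _).2 ρ.2] at hd2
  have hGρ : hGm R (↑ρ : F) = 1 := by
    have : (hGm R (↑ρ : F)).toAdd = 0 := by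
      linear_combination (norm := abel) hd2
    have := congrArg Multiplicative.ofAdd this
    simpa using this
  obtain ⟨d, hd, hcd⟩ := dec_lemma R ρ.2 hGρ
  exact ⟨d, hd, by rw [hcd]⟩

/-- `N = F/[F,R]`. -/
abbrev Nquot := F ⧸ ⁅(⊤ : Subgroup F), R⁆

/-- projection `F → N`. -/
def mkN : F →* Nquot R := QuotientGroup.mk' ⁅(⊤ : Subgroup F), R⁆

lemma commN {ρ : F} (hρ : ρ ∈ R) (u : Nquot R) : u * mkN R ρ = mkN R ρ * u := by
  induction u using QuotientGroup.induction_on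
  rename_i f
  show QuotientGroup.mk f * mkN R ρ = mkN R ρ * QuotientGroup.mk f
  have h1 : (QuotientGroup.mk f : Nquot R) = mkN R f := rfl
  have h2 : f * ρ = ⁅f, ρ⁆ * (ρ * f) := by
    rw [commutatorElement_def]; group
  rw [h1, ← map_mul, ← map_mul, h2, map_mul]
  have h3 : mkN R ⁅f, ρ⁆ = 1 := by
    rw [mkN, QuotientGroup.mk'_apply, QuotientGroup.eq_one_iff]
    exact Subgroup.commutator_mem_commutator (Subgroup.mem_top f) hρ
  rw [h3, one_mul]

/-- image of `R` in `N`. -/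
def Asub : Subgroup (Nquot R) := Subgroup.map (mkN R) R

noncomputable instance : CommGroup ↥(Asub R) :=
  { (inferInstance : Group ↥(Asub R)) with
    mul_comm := by
      rintro ⟨a, ha⟩ ⟨b, hb⟩
      obtain ⟨ρ, hρ, rfl⟩ := ha
      apply Subtype.ext
      show mkN R ρ * b = b * mkN R ρ
      exact (commN R hρ b).symm }

lemma rc_mkN_mem (p : (F ⧸ R) × (F ⧸ R)) : mkN R (rc R p) ∈ Asub R :=
  ⟨rc R p, rc_mem R p, rfl⟩

/-- the 2-cocycle identity in `N`. -/
lemma cocycN (g h k : F ⧸ R) :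
    mkN R (rc R (h, k)) * mkN R (rc R (g, h * k)) =
      mkN R (rc R (g, h)) * mkN R (rc R (g * h, k)) := by
  have e1 : rc R (g, h) * rc R (g * h, k) =
      sec R g * sec R h * sec R k * (sec R (g * h * k))⁻¹ := by
    simp only [rc]; group
  have e2 : sec R g * rc R (h, k) * (sec R g)⁻¹ * rc R (g, h * k) =
      sec R g * sec R h * sec R k * (sec R (g * (h * k)))⁻¹ := by
    simp only [rc]; group
  have e3 : mkN R (sec R g * rc R (h, k) * (sec R g)⁻¹) = mkN R (rc R (h, k)) := by
    rw [map_mul, map_mul, map_inv, commN R (rc_mem R (h, k)) (mkN R (sec R g))]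
    group
  calc mkN R (rc R (h, k)) * mkN R (rc R (g, h * k))
      = mkN R (sec R g * rc R (h, k) * (sec R g)⁻¹) * mkN R (rc R (g, h * k)) := by rw [e3]
    _ = mkN R (sec R g * rc R (h, k) * (sec R g)⁻¹ * rc R (g, h * k)) := by rw [← map_mul]
    _ = mkN R (sec R g * sec R h * sec R k * (sec R (g * (h * k)))⁻¹) := by rw [e2]
    _ = mkN R (rc R (g, h) * rc R (g * h, k)) := by rw [e1, mul_assoc g h k]
    _ = mkN R (rc R (g, h)) * mkN R (rc R (g * h, k)) := map_mul _ _ _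

/-- `φ₀ : ℤ[G²] → A ⊆ N`. -/
noncomputable def φ0 : (((F ⧸ R) × (F ⧸ R)) →₀ ℤ) →ₗ[ℤ] Additive ↥(Asub R) :=
  Finsupp.lift _ ℤ _ fun p => Additive.ofMul (⟨mkN R (rc R p), rc_mkN_mem R p⟩ : ↥(Asub R))

lemma φ0_single (p : (F ⧸ R) × (F ⧸ R)) :
    φ0 R (Finsupp.single p 1) =
      Additive.ofMul (⟨mkN R (rc R p), rc_mkN_mem R p⟩ : ↥(Asub R)) := by
  rw [φ0, Finsupp.lift_apply, Finsupp.sum_single_index] <;> simp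

lemma φ0_vanish : LinearMap.range (barD3 (F ⧸ R)) ≤ LinearMap.ker (φ0 R) := by
  rintro z ⟨w, rfl⟩
  have key : (φ0 R).comp (barD3 (F ⧸ R)) = 0 := by
    apply Finsupp.lhom_ext'
    intro t
    apply LinearMap.ext_ring
    obtain ⟨g, h, k⟩ := t
    simp only [LinearMap.comp_apply, Finsupp.lsingle_apply, LinearMap.zero_apply, one_smul]
    rw [barD3_single]
    simp only [map_add, map_sub, φ0_single]
    set a1 : ↥(Asub R) := ⟨mkN R (rc R ((g, h, k).2.1, (g, h, k).2.2)), _⟩ with ha1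
    -- the four values
    have hcoc := cocycN R g h k
    have hsub : (⟨mkN R (rc R (h, k)), rc_mkN_mem R _⟩ : ↥(Asub R)) *
        ⟨mkN R (rc R (g, h * k)), rc_mkN_mem R _⟩ =
        (⟨mkN R (rc R (g, h)), rc_mkN_mem R _⟩ : ↥(Asub R)) *
        ⟨mkN R (rc R (g * h, k)), rc_mkN_mem R _⟩ := by
      apply Subtype.ext
      exact hcoc
    have hadd := congrArg Additive.ofMul hsub
    rw [ofMul_mul, ofMul_mul] at hadd
    have : ∀ x1 x2 x3 x4 : Additive ↥(Asub R), x1 + x3 = x4 + x2 →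
        x1 - x2 + x3 - x4 = 0 := by
      intro x1 x2 x3 x4 hh
      have : x1 - x2 + x3 - x4 = (x1 + x3) - (x4 + x2) := by abel
      rw [this, hh, sub_self]
    exact this _ _ _ _ hadd
  exact LinearMap.congr_fun key w

/-- `φ : K → A`. -/
noncomputable def φA : Kmod (F ⧸ R) →ₗ[ℤ] Additive ↥(Asub R) :=
  Submodule.liftQ _ (φ0 R) (φ0_vanish R)

/-- `φ` followed by inclusion into `N`. -/
noncomputable def φN (k : Kmod (F ⧸ R)) : Nquot R := ↑(Additive.toMul (φA R k))

lemma φN_mem (k : Kmod (F ⧸ R)) : ∃ ρ ∈ R, φN R k = mkN R ρ := by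
  have := (Additive.toMul (φA R k)).2
  obtain ⟨ρ, hρ, hh⟩ := this
  exact ⟨ρ, hρ, by rw [φN, ← hh]⟩

lemma φN_comm (k : Kmod (F ⧸ R)) (u : Nquot R) : u * φN R k = φN R k * u := by
  obtain ⟨ρ, hρ, hh⟩ := φN_mem R k
  rw [hh]
  exact commN R hρ u

lemma φN_add (x y : Kmod (F ⧸ R)) : φN R (x + y) = φN R x * φN R y := by
  rw [φN, φN, φN, map_add]
  rfl

lemma φN_qK_single (p : (F ⧸ R) × (F ⧸ R)) :
    φN R (qK (F ⧸ R) (Finsupp.single p 1)) = mkN R (rc R p) := by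
  have h0 := LinearMap.congr_fun
    (Submodule.liftQ_mkQ (LinearMap.range (barD3 (F ⧸ R))) (φ0 R) (φ0_vanish R))
    (Finsupp.single p 1)
  simp only [LinearMap.comp_apply] at h0
  have : φA R (qK (F ⧸ R) (Finsupp.single p 1)) = φ0 R (Finsupp.single p 1) := h0
  rw [φN, this, φ0_single]
  rfl

/-- the homomorphism `Λ : CExt → N`. -/
noncomputable def ΛN : CExt (F ⧸ R) →* Nquot R :=
  MonoidHom.mk' (fun m => mkN R (sec R m.1) * φN R m.2) (by
    rintro ⟨g, a⟩ ⟨h, b⟩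
    show mkN R (sec R (g * h)) * φN R (a + b + qK (F ⧸ R) (Finsupp.single (g, h) 1)) = _
    rw [φN_add, φN_add, φN_qK_single]
    have hsec : mkN R (sec R g) * mkN R (sec R h) =
        mkN R (sec R (g * h)) * mkN R (rc R (g, h)) := by
      rw [← map_mul, sec_mul, map_mul, ← commN R (rc_mem R (g, h)) (mkN R (sec R (g * h)))]
    calc mkN R (sec R (g * h)) * (φN R a * φN R b * mkN R (rc R (g, h)))
        = mkN R (sec R (g * h)) * (mkN R (rc R (g, h)) * (φN R a * φN R b)) := by
          rw [commN R (rc_mem R (g, h)) (φN R a * φN R b)]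
      _ = (mkN R (sec R g) * mkN R (sec R h)) * (φN R a * φN R b) := by
          rw [hsec, mul_assoc]
      _ = (mkN R (sec R g) * φN R a) * (mkN R (sec R h) * φN R b) := by
          rw [mul_assoc (mkN R (sec R g)), ← mul_assoc (mkN R (sec R h)),
            φN_comm R a (mkN R (sec R h)), mul_assoc (φN R a), ← mul_assoc (mkN R (sec R g))]
    )

lemma ΛN_apply (m : CExt (F ⧸ R)) : ΛN R m = mkN R (sec R m.1) * φN R m.2 := rfl

/-- `Λ ∘ Φ`. -/
noncomputable def ΛΦ : F →* Nquot R := (ΛN R).comp (Φm R)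

lemma ΛΦ_of (x : IsFreeGroup.Generators F) :
    ΛΦ R (IsFreeGroup.of x) = mkN R (sec R (πq R (IsFreeGroup.of x))) := by
  rw [ΛΦ, MonoidHom.comp_apply, Φm_of, ΛN_apply]
  have : φN R ((cext (πq R (IsFreeGroup.of x)) 0 : CExt (F ⧸ R)).2) = 1 := by
    show φN R 0 = 1
    rw [φN, map_zero]
    rfl
  rw [this, mul_one]
  rfl

/-- projection `N → G`. -/
noncomputable def projN : Nquot R →* F ⧸ R :=
  QuotientGroup.lift _ (πq R) (by
    intro x hx
    rw [MonoidHom.mem_ker, πq_eq_one_iff]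
    exact Subgroup.commutator_le_right ⊤ R hx)

lemma projN_mkN (w : F) : projN R (mkN R w) = πq R w := rfl

lemma projN_ΛΦ (w : F) : projN R (ΛΦ R w) = πq R w := by
  have : (projN R).comp (ΛΦ R) = πq R := by
    apply IsFreeGroup.ext_hom
    intro x
    rw [MonoidHom.comp_apply, ΛΦ_of, projN_mkN, πq_sec]
  exact congrArg (fun f => f w) this

lemma δ_mem (w : F) : ∃ ρ ∈ R, (mkN R w)⁻¹ * ΛΦ R w = mkN R ρ := by
  obtain ⟨v, hv⟩ := QuotientGroup.mk'_surjective ⁅(⊤ : Subgroup F), R⁆ ((mkN R w)⁻¹ * ΛΦ R w)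
  refine ⟨v, ?_, hv.symm⟩
  rw [← πq_eq_one_iff]
  have : projN R (mkN R v) = 1 := by
    show projN R ((QuotientGroup.mk' ⁅(⊤ : Subgroup F), R⁆) v) = 1
    rw [hv, map_mul, map_inv, projN_ΛΦ]
    show ((projN R) ((QuotientGroup.mk' ⁅(⊤ : Subgroup F), R⁆) w))⁻¹ * (πq R) w = 1
    rw [show (projN R) ((QuotientGroup.mk' ⁅(⊤ : Subgroup F), R⁆) w) = πq R w from rfl]
    exact inv_mul_cancel _
  rwa [projN_mkN] at this

/-- the difference homomorphism `δ : F → N`. -/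
noncomputable def δh : F →* Nquot R :=
  MonoidHom.mk' (fun w => (mkN R w)⁻¹ * ΛΦ R w) (by
    intro v w
    obtain ⟨ρ, hρ, hv⟩ := δ_mem R v
    show (mkN R (v * w))⁻¹ * ΛΦ R (v * w) =
      ((mkN R v)⁻¹ * ΛΦ R v) * ((mkN R w)⁻¹ * ΛΦ R w)
    rw [map_mul, map_mul, mul_inv_rev]
    calc (mkN R w)⁻¹ * (mkN R v)⁻¹ * (ΛΦ R v * ΛΦ R w)
        = (mkN R w)⁻¹ * ((mkN R v)⁻¹ * ΛΦ R v) * ΛΦ R w := by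
          rw [mul_assoc, mul_assoc, mul_assoc]
      _ = (mkN R w)⁻¹ * mkN R ρ * ΛΦ R w := by rw [hv]
      _ = mkN R ρ * ((mkN R w)⁻¹ * ΛΦ R w) := by
          rw [commN R hρ ((mkN R w)⁻¹), mul_assoc]
      _ = ((mkN R v)⁻¹ * ΛΦ R v) * ((mkN R w)⁻¹ * ΛΦ R w) := by rw [← hv])

/-- Key injectivity lemma: commutator elements killed by `Φ` lie in `[F,R]`. -/
lemma inj_lemma {d : F} (hd : d ∈ commutator F) (hΦ : Φm R d = 1) :
    d ∈ ⁅(⊤ : Subgroup F), R⁆ := by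
  have hδ : δh R d = 1 := by
    have hker : commutator F ≤ (δh R).ker := by
      rw [commutator, Subgroup.commutator_le]
      intro a _ b _
      rw [MonoidHom.mem_ker, map_commutatorElement, commutatorElement_eq_one_iff_commute]
      obtain ⟨ρ, hρ, hb⟩ := δ_mem R b
      show δh R a * δh R b = δh R b * δh R a
      show δh R a * ((mkN R b)⁻¹ * ΛΦ R b) = ((mkN R b)⁻¹ * ΛΦ R b) * δh R a
      rw [hb]
      exact commN R hρ (δh R a)
    exact hker hd
  have h1 : (mkN R d)⁻¹ * ΛΦ R d = 1 := hδ
  have h2 : ΛΦ R d = 1 := by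
    rw [ΛΦ, MonoidHom.comp_apply, hΦ, map_one]
  rw [h2, mul_one, inv_eq_one] at h1
  rwa [mkN, QuotientGroup.mk'_apply, QuotientGroup.eq_one_iff] at h1

lemma mem_ker_d2bar {d : F} (hdR : d ∈ R) (hdC : d ∈ commutator F) :
    d2bar (cc R d + σK (F ⧸ R)) = 0 := by
  rw [map_add, d2bar_cc, d2bar_σK, (πq_eq_one_iff R d).2 hdR, hGm_commutator R hdC]
  simp

lemma Φm_eq_one_iff {d : F} (hdR : d ∈ R) :
    Φm R d = 1 ↔ cc R d = -σK (F ⧸ R) := by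
  constructor
  · intro h
    have := congrArg Prod.snd h
    rw [cext_one_def] at this
    exact this
  · intro h
    have h1 : (Φm R d).1 = (1 : CExt (F ⧸ R)).1 := by
      rw [Φm_fst, cext_one_def, (πq_eq_one_iff R d).2 hdR]
    exact Prod.ext h1 (by rw [cext_one_def]; exact h)

lemma commFR_le_ker : ⁅(⊤ : Subgroup F), R⁆ ≤ (Φm R).ker := by
  rw [Subgroup.commutator_le]
  intro f _ r hr
  rw [MonoidHom.mem_ker, map_commutatorElement, commutatorElement_eq_one_iff_commute]
  have hΦr : Φm R r = cext 1 (cc R r) := by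
    refine Prod.ext ?_ rfl
    rw [Φm_fst, (πq_eq_one_iff R r).2 hr]
    rfl
  rw [hΦr]
  exact cext_central (Φm R f) (cc R r)

/-- the map `ker d₂ → ker d̂₂`. -/
noncomputable def f1 : ↥(LinearMap.ker (barD2 (F ⧸ R))) →ₗ[ℤ]
    ↥(LinearMap.ker (d2bar (G := F ⧸ R))) :=
  LinearMap.codRestrict _
    ((qK (F ⧸ R)).comp (LinearMap.ker (barD2 (F ⧸ R))).subtype) (fun z => by
      rw [LinearMap.mem_ker, LinearMap.comp_apply, d2bar_qK]
      exact z.2)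

lemma ker_f1 : LinearMap.ker (f1 R) =
    (LinearMap.range (barD3 (F ⧸ R))).comap (LinearMap.ker (barD2 (F ⧸ R))).subtype := by
  ext z
  rw [LinearMap.mem_ker, Submodule.mem_comap]
  constructor
  · intro h
    have := congrArg Subtype.val h
    simp only [f1, LinearMap.codRestrict_apply, LinearMap.comp_apply] at this
    rw [← qK_eq_zero_iff]
    exact this
  · intro h
    apply Subtype.ext
    simp only [f1, LinearMap.codRestrict_apply, LinearMap.comp_apply]
    rw [ZeroMemClass.coe_zero]
    exact (qK_eq_zero_iff _).2 h

lemma f1_surj : Function.Surjective (f1 R) := by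
  rintro ⟨k, hk⟩
  obtain ⟨z, rfl⟩ := qK_surjective (G := F ⧸ R) k
  rw [LinearMap.mem_ker, d2bar_qK] at hk
  exact ⟨⟨z, hk⟩, Subtype.ext rfl⟩

/-- `H₂ ≅ ker d̂₂`. -/
noncomputable def e1 : H2 (F ⧸ R) ≃ₗ[ℤ] ↥(LinearMap.ker (d2bar (G := F ⧸ R))) :=
  (Submodule.quotEquivOfEq _ _ (ker_f1 R).symm).trans
    (LinearMap.quotKerEquivOfSurjective (f1 R) (f1_surj R))

/-- the Hopf homomorphism `R ⊓ [F,F] → ker d̂₂`. -/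
noncomputable def t0 : ↥(R ⊓ commutator F) →* Multiplicative
    ↥(LinearMap.ker (d2bar (G := F ⧸ R))) :=
  MonoidHom.mk' (fun d => Multiplicative.ofAdd
    (⟨cc R ↑d + σK (F ⧸ R), by
      rw [LinearMap.mem_ker]
      exact mem_ker_d2bar R d.2.1 d.2.2⟩ :
        ↥(LinearMap.ker (d2bar (G := F ⧸ R))))) (by
    intro a b
    have hval : cc R (↑(a * b) : F) + σK (F ⧸ R) =
        (cc R ↑a + σK (F ⧸ R)) + (cc R ↑b + σK (F ⧸ R)) := by
      push_cast [cc_mul_R R a.2.1 b.2.1]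
      abel
    exact congrArg Multiplicative.ofAdd (Subtype.ext hval))

theorem hopf_aux : Nonempty (H2 (F ⧸ R) ≃+
    Additive (↥(R ⊓ commutator F) ⧸
      (⁅(⊤ : Subgroup F), R⁆.subgroupOf (R ⊓ commutator F)))) := by
  have hlift : ∀ x ∈ ⁅(⊤ : Subgroup F), R⁆.subgroupOf (R ⊓ commutator F), t0 R x = 1 := by
    intro x hx
    rw [Subgroup.mem_subgroupOf] at hx
    have hΦ : Φm R ↑x = 1 := commFR_le_ker R hx
    have hcc : cc R ↑x = -σK (F ⧸ R) := (Φm_eq_one_iff R x.2.1).1 hΦ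
    apply Multiplicative.toAdd.injective
    apply Subtype.ext
    show cc R ↑x + σK (F ⧸ R) = 0
    rw [hcc]
    abel
  let tq := QuotientGroup.lift _ (t0 R) hlift
  let tadd : Additive (↥(R ⊓ commutator F) ⧸
      (⁅(⊤ : Subgroup F), R⁆.subgroupOf (R ⊓ commutator F))) →+
      ↥(LinearMap.ker (d2bar (G := F ⧸ R))) :=
    AddMonoidHom.mk' (fun a => (tq (Additive.toMul a)).toAdd) (by
      intro a b
      show (tq (Additive.toMul a * Additive.toMul b)).toAdd = _
      rw [map_mul]
      rfl)
  have hinj : Function.Injective tadd := by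
    rw [injective_iff_map_eq_zero]
    intro a ha
    obtain ⟨d, hd⟩ := QuotientGroup.mk'_surjective _ (Additive.toMul a)
    have h1 : tq (Additive.toMul a) = 1 := by
      apply Multiplicative.toAdd.injective
      exact ha
    rw [← hd] at h1
    have h0 : t0 R d = 1 := by
      exact h1
    have hcc : cc R ↑d = -σK (F ⧸ R) := by
      have := congrArg (fun y => (Multiplicative.toAdd y : ↥(LinearMap.ker
        (d2bar (G := F ⧸ R)))).val) h0
      simp only [toAdd_one, ZeroMemClass.coe_zero] at this
      have h2 : cc R ↑d + σK (F ⧸ R) = 0 := this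
      linear_combination (norm := abel) h2
    have hΦ : Φm R ↑d = 1 := (Φm_eq_one_iff R d.2.1).2 hcc
    have hmem : (↑d : F) ∈ ⁅(⊤ : Subgroup F), R⁆ := inj_lemma R d.2.2 hΦ
    have : Additive.toMul a = 1 := by
      rw [← hd, QuotientGroup.mk'_apply]
      rw [QuotientGroup.eq_one_iff]
      exact (Subgroup.mem_subgroupOf).2 hmem
    calc a = Additive.ofMul (Additive.toMul a) := rfl
      _ = Additive.ofMul 1 := by rw [this]
      _ = 0 := rfl
  have hsurj : Function.Surjective tadd := by
    rintro ⟨k, hk⟩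
    obtain ⟨z, rfl⟩ := qK_surjective (G := F ⧸ R) k
    rw [LinearMap.mem_ker, d2bar_qK] at hk
    obtain ⟨d, hd, hzd⟩ := cycle_rep R hk
    refine ⟨Additive.ofMul (QuotientGroup.mk (⟨d, hd⟩ : ↥(R ⊓ commutator F))), ?_⟩
    apply Subtype.ext
    show cc R d + σK (F ⧸ R) = qK (F ⧸ R) z
    rw [hzd]
  exact ⟨((e1 R).toAddEquiv).trans (AddEquiv.ofBijective tadd ⟨hinj, hsurj⟩).symm⟩

end Main
end HopfAux

/-- **Hopf's formula.** Let `F` be a free group, `R` a normal subgroup of `F` and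
`G = F/R`. Then `H₂(G, ℤ) ≅ (R ∩ [F,F]) / [F,R]`. -/
theorem hopf_formula {F : Type*} [Group F] [IsFreeGroup F] (R : Subgroup F) [R.Normal] :
    Nonempty (H2 (F ⧸ R) ≃+
      Additive (↥(R ⊓ commutator F) ⧸
        (⁅(⊤ : Subgroup F), R⁆.subgroupOf (R ⊓ commutator F)))) :=
  HopfAux.hopf_aux R
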